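/- Let 0 < a ≤ b be real numbers and let A_1, …, A_n be Hermitian k×k complex matrices with a·I ≤ A_i ≤ b·I for each i. Then ((1/n)(A_1 + ⋯ + A_n)) ⊗_s ((1/n)(A_1⁻¹ + ⋯ + A_n⁻¹)) ≤ ((a² + b²)/(2ab)) · I, where I is the k²×k² identity matrix. (This is a reverse of the weighted arithmetic–harmonic mean inequality.) -/

import Mathlib

open Matrix MeasureTheory
open scoped Kronecker ComplexOrder

set_option linter.unusedSectionVars false
set_option linter.unreachableTactic false
set_option linter.unusedTactic false

attribute [local instance] Matrix.frobeniusNormedAddCommGroup Matrix.frobeniusNormedSpace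

/-- Symmetrized Kronecker tensor product: `X ⊗ₛ Y = (1/2)(X ⊗ Y + Y ⊗ X)`. -/
noncomputable def symKron {k : ℕ} (X Y : Matrix (Fin k) (Fin k) ℂ) :
    Matrix (Fin k × Fin k) (Fin k × Fin k) ℂ :=
  ((1 : ℂ) / 2) • (X ⊗ₖ Y + Y ⊗ₖ X)

section Aux

variable {ι κ : Type*} [Fintype ι] [DecidableEq ι] [Fintype κ] [DecidableEq κ]

private lemma psd_smul' {M : Matrix ι ι ℂ} (hM : M.PosSemidef) {r : ℝ} (hr : 0 ≤ r) :
    (r • M).PosSemidef := by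
  have h : r • M = (r : ℂ) • M := by ext i j; simp [Complex.real_smul]
  rw [h]
  refine ⟨?_, fun x => ?_⟩
  · unfold Matrix.IsHermitian
    rw [conjTranspose_smul, hM.1.eq]
    norm_num
  · exact (hM.smul (a := (r : ℂ)) (by exact_mod_cast hr)).2 x

omit [Fintype ι] [DecidableEq ι] [Fintype κ] [DecidableEq κ] in
private lemma kron_conjTranspose' (X : Matrix ι ι ℂ) (Y : Matrix κ κ ℂ) :
    (X ⊗ₖ Y)ᴴ = Xᴴ ⊗ₖ Yᴴ := by
  ext ⟨i, j⟩ ⟨p, q⟩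
  simp [conjTranspose_apply, mul_comm]

omit [Fintype ι] [DecidableEq ι] [Fintype κ] [DecidableEq κ] in
private lemma kron_isHermitian' {X : Matrix ι ι ℂ} {Y : Matrix κ κ ℂ}
    (hX : X.IsHermitian) (hY : Y.IsHermitian) : (X ⊗ₖ Y).IsHermitian := by
  unfold Matrix.IsHermitian
  rw [kron_conjTranspose', hX.eq, hY.eq]

omit [DecidableEq ι] [DecidableEq κ] in
private lemma kron_posSemidef' {X : Matrix ι ι ℂ} {Y : Matrix κ κ ℂ}
    (hX : X.PosSemidef) (hY : Y.PosSemidef) : (X ⊗ₖ Y).PosSemidef := by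
  exact hX.kronecker hY

omit [Fintype ι] [DecidableEq ι] [DecidableEq κ] in
private lemma sum_kron' {s : Finset ι} (f : ι → Matrix κ κ ℂ) (B : Matrix κ κ ℂ) :
    (∑ i ∈ s, f i) ⊗ₖ B = ∑ i ∈ s, f i ⊗ₖ B := by
  ext ⟨i, j⟩ ⟨p, q⟩
  simp [Matrix.sum_apply, Finset.sum_mul]

omit [Fintype ι] [DecidableEq ι] [DecidableEq κ] in
private lemma kron_sum' {s : Finset ι} (f : ι → Matrix κ κ ℂ) (B : Matrix κ κ ℂ) :
    B ⊗ₖ (∑ i ∈ s, f i) = ∑ i ∈ s, B ⊗ₖ f i := by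
  ext ⟨i, j⟩ ⟨p, q⟩
  simp [Matrix.sum_apply, Finset.mul_sum]

omit [Fintype ι] [DecidableEq ι] [DecidableEq κ] in
private lemma psd_sum' {s : Finset ι} {f : ι → Matrix κ κ ℂ}
    (h : ∀ i ∈ s, (f i).PosSemidef) : (∑ i ∈ s, f i).PosSemidef := by
  classical
  induction s using Finset.induction_on with
  | empty => simpa using Matrix.PosSemidef.zero
  | insert _ _ hne ih =>
    rw [Finset.sum_insert hne]
    exact (h _ (Finset.mem_insert_self _ _)).add
      (ih fun i hi => h i (Finset.mem_insert_of_mem hi))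

omit [Fintype κ] [DecidableEq κ] in
private lemma eig_ge' {X : Matrix ι ι ℂ} (hX : X.IsHermitian) {m : ℝ}
    (h : (X - m • 1).PosSemidef) (i : ι) : m ≤ hX.eigenvalues i := by
  have h1 := h.re_dotProduct_nonneg ⇑(hX.eigenvectorBasis i)
  have hv : star ⇑(hX.eigenvectorBasis i) ⬝ᵥ ⇑(hX.eigenvectorBasis i) = 1 := by
    rw [dotProduct_comm, ← EuclideanSpace.inner_eq_star_dotProduct, inner_self_eq_norm_sq_to_K,
      hX.eigenvectorBasis.orthonormal.1 i]
    norm_num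
  rw [sub_mulVec, hX.mulVec_eigenvectorBasis, smul_mulVec, one_mulVec,
    dotProduct_sub, dotProduct_smul, dotProduct_smul, hv] at h1
  simp only [map_sub, RCLike.smul_re, smul_eq_mul, RCLike.one_re, mul_one] at h1
  linarith

omit [Fintype κ] [DecidableEq κ] in
private lemma eig_le' {X : Matrix ι ι ℂ} (hX : X.IsHermitian) {M : ℝ}
    (h : (M • (1 : Matrix ι ι ℂ) - X).PosSemidef) (i : ι) : hX.eigenvalues i ≤ M := by
  have h1 := h.re_dotProduct_nonneg ⇑(hX.eigenvectorBasis i)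
  have hv : star ⇑(hX.eigenvectorBasis i) ⬝ᵥ ⇑(hX.eigenvectorBasis i) = 1 := by
    rw [dotProduct_comm, ← EuclideanSpace.inner_eq_star_dotProduct, inner_self_eq_norm_sq_to_K,
      hX.eigenvectorBasis.orthonormal.1 i]
    norm_num
  rw [sub_mulVec, hX.mulVec_eigenvectorBasis, smul_mulVec, one_mulVec,
    dotProduct_sub, dotProduct_smul, dotProduct_smul, hv] at h1
  simp only [map_sub, RCLike.smul_re, smul_eq_mul, RCLike.one_re, mul_one] at h1
  linarith

omit [Fintype κ] [DecidableEq κ] in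
private lemma master' {X : Matrix ι ι ℂ} (hX : X.IsHermitian) {m M : ℝ} (hm : 0 < m)
    (h1 : (X - m • 1).PosSemidef) (h2 : (M • (1 : Matrix ι ι ℂ) - X).PosSemidef)
    (c e f : ℝ) (hcef : ∀ t : ℝ, m ≤ t → t ≤ M → 0 ≤ c + e * t + f * t⁻¹) :
    (c • (1 : Matrix ι ι ℂ) + e • X + f • X⁻¹).PosSemidef := by
  set lam := hX.eigenvalues with hlam
  have hlb := fun i => eig_ge' hX h1 i
  have hub := fun i => eig_le' hX h2 i
  have hpos : ∀ i, 0 < lam i := fun i => lt_of_lt_of_le hm (hlb i)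
  set U : Matrix ι ι ℂ := (hX.eigenvectorUnitary : Matrix ι ι ℂ) with hU
  have hU1 : U * star U = 1 := Matrix.mem_unitaryGroup_iff.mp hX.eigenvectorUnitary.2
  have hU2 : star U * U = 1 := Matrix.mem_unitaryGroup_iff'.mp hX.eigenvectorUnitary.2
  have hXd : X = U * diagonal (RCLike.ofReal ∘ lam) * star U := hX.spectral_theorem
  have hXinv : X⁻¹ = U * diagonal (fun i => ((lam i : ℂ))⁻¹) * star U := by
    apply Matrix.inv_eq_left_inv
    calc (U * diagonal (fun i => ((lam i : ℂ))⁻¹) * star U) * X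
        = U * (diagonal (fun i => ((lam i : ℂ))⁻¹) * (star U * U)
            * diagonal (RCLike.ofReal ∘ lam)) * star U := by
          rw [hXd]; simp only [mul_assoc]
      _ = U * (diagonal (fun i => ((lam i : ℂ))⁻¹) * diagonal (RCLike.ofReal ∘ lam)) * star U := by
          rw [hU2, mul_one]
      _ = U * 1 * star U := by
          rw [diagonal_mul_diagonal]
          have h0 : (fun i => ((lam i : ℂ))⁻¹ * (RCLike.ofReal ∘ lam) i) = fun _ => (1:ℂ) := by
            funext i
            simp only [Function.comp_apply, RCLike.ofReal, Complex.coe_algebraMap]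
            exact inv_mul_cancel₀ (by exact_mod_cast (hpos i).ne')
          rw [h0, diagonal_one]
      _ = 1 := by rw [mul_one, hU1]
  have hd : (diagonal (fun i => ((c + e * lam i + f * (lam i)⁻¹ : ℝ) : ℂ)) : Matrix ι ι ℂ)
      = c • 1 + e • diagonal (RCLike.ofReal ∘ lam) + f • diagonal (fun i => ((lam i : ℂ))⁻¹) := by
    ext i j
    by_cases h : i = j <;>
      simp [h, diagonal_apply, Complex.real_smul, RCLike.ofReal, Complex.coe_algebraMap] <;>
      push_cast <;> ring
  have key : c • (1 : Matrix ι ι ℂ) + e • X + f • X⁻¹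
      = U * diagonal (fun i => ((c + e * lam i + f * (lam i)⁻¹ : ℝ) : ℂ)) * star U := by
    calc c • (1 : Matrix ι ι ℂ) + e • X + f • X⁻¹
        = c • (U * 1 * star U) + e • (U * diagonal (RCLike.ofReal ∘ lam) * star U)
          + f • (U * diagonal (fun i => ((lam i : ℂ))⁻¹) * star U) := by
          rw [← hXd, ← hXinv, mul_one, hU1]
      _ = U * (c • (1 : Matrix ι ι ℂ) + e • diagonal (RCLike.ofReal ∘ lam)
          + f • diagonal (fun i => ((lam i : ℂ))⁻¹)) * star U := by
          simp only [Matrix.mul_add, Matrix.add_mul, Matrix.mul_smul, Matrix.smul_mul]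
      _ = _ := by rw [← hd]
  rw [key, Matrix.star_eq_conjTranspose]
  refine Matrix.PosSemidef.mul_mul_conjTranspose_same ?_ U
  refine Matrix.PosSemidef.diagonal fun i => ?_
  have h := hcef (lam i) (hlb i) (hub i)
  show (0:ℂ) ≤ ((c + e * lam i + f * (lam i)⁻¹ : ℝ) : ℂ)
  exact Complex.zero_le_real.mpr h

omit [Fintype κ] [DecidableEq κ] in
private lemma inv_lb' {X : Matrix ι ι ℂ} (hX : X.IsHermitian) {m M : ℝ} (hm : 0 < m)
    (h1 : (X - m • 1).PosSemidef) (h2 : (M • (1 : Matrix ι ι ℂ) - X).PosSemidef) :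
    (X⁻¹ - M⁻¹ • 1).PosSemidef := by
  have h := master' hX hm h1 h2 (-M⁻¹) 0 1 (fun t ht1 ht2 => by
    have h3 : M⁻¹ ≤ t⁻¹ := inv_anti₀ (hm.trans_le ht1) ht2
    linarith)
  have e : X⁻¹ - M⁻¹ • 1 = (-M⁻¹) • (1 : Matrix ι ι ℂ) + (0:ℝ) • X + (1:ℝ) • X⁻¹ := by
    module
  rw [e]; exact h

omit [Fintype κ] [DecidableEq κ] in
private lemma inv_ub' {X : Matrix ι ι ℂ} (hX : X.IsHermitian) {m M : ℝ} (hm : 0 < m)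
    (h1 : (X - m • 1).PosSemidef) (h2 : (M • (1 : Matrix ι ι ℂ) - X).PosSemidef) :
    (m⁻¹ • (1 : Matrix ι ι ℂ) - X⁻¹).PosSemidef := by
  have h := master' hX hm h1 h2 m⁻¹ 0 (-1) (fun t ht1 ht2 => by
    have ht0 : 0 < t := hm.trans_le ht1
    have h3 : t⁻¹ ≤ m⁻¹ := inv_anti₀ hm ht1
    linarith)
  have e : m⁻¹ • (1 : Matrix ι ι ℂ) - X⁻¹
      = m⁻¹ • (1 : Matrix ι ι ℂ) + (0:ℝ) • X + (-1:ℝ) • X⁻¹ := by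
    module
  rw [e]; exact h

omit [Fintype κ] [DecidableEq κ] in
private lemma key_combo' {X : Matrix ι ι ℂ} (hX : X.IsHermitian) {m M : ℝ} (hm : 0 < m)
    (h1 : (X - m • 1).PosSemidef) (h2 : (M • (1 : Matrix ι ι ℂ) - X).PosSemidef) :
    ((m + M) • (1 : Matrix ι ι ℂ) - X - (m * M) • X⁻¹).PosSemidef := by
  have h := master' hX hm h1 h2 (m + M) (-1) (-(m * M)) (fun t ht1 ht2 => by
    have ht0 : 0 < t := hm.trans_le ht1
    have key : (m + M) + (-1) * t + (-(m * M)) * t⁻¹ = ((t - m) * (M - t)) / t := by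
      field_simp; ring
    rw [key]
    exact div_nonneg (mul_nonneg (by linarith) (by linarith)) ht0.le)
  have e : (m + M) • (1 : Matrix ι ι ℂ) - X - (m * M) • X⁻¹
      = (m + M) • (1 : Matrix ι ι ℂ) + (-1:ℝ) • X + (-(m * M)) • X⁻¹ := by module
  rw [e]; exact h

omit [Fintype κ] [DecidableEq κ] in
private lemma pd_of_lb' {X : Matrix ι ι ℂ} {a : ℝ} (ha : 0 < a)
    (h : (X - a • 1).PosSemidef) : X.PosDef := by
  have h1 : (a • (1 : Matrix ι ι ℂ)).PosDef := by
    have e : a • (1 : Matrix ι ι ℂ) = diagonal (fun _ => (a : ℂ)) := by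
      ext i j; by_cases hij : i = j <;> simp [hij, one_apply, Complex.real_smul]
    rw [e, posDef_diagonal_iff]
    exact fun i => Complex.zero_lt_real.mpr ha
  have e2 : X = (X - a • 1) + a • 1 := by abel
  rw [e2]
  exact Matrix.PosDef.posSemidef_add h h1

omit [Fintype κ] [DecidableEq κ] in
private lemma pair' {P Q : Matrix ι ι ℂ} {a b : ℝ} (ha : 0 < a) (hab : a ≤ b)
    (hP : P.IsHermitian) (hQ : Q.IsHermitian)
    (hPa : (P - a • 1).PosSemidef) (hPb : ((b:ℝ) • (1 : Matrix ι ι ℂ) - P).PosSemidef)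
    (hQa : (Q - a • 1).PosSemidef) (hQb : ((b:ℝ) • (1 : Matrix ι ι ℂ) - Q).PosSemidef) :
    ((a/b + b/a) • (1 : Matrix (ι × ι) (ι × ι) ℂ) - P ⊗ₖ Q⁻¹ - P⁻¹ ⊗ₖ Q).PosSemidef := by
  have hb : 0 < b := ha.trans_le hab
  have hQpd := pd_of_lb' ha hQa
  have hPpd := pd_of_lb' ha hPa
  have hQinv_psd : (Q⁻¹).PosSemidef := hQpd.posSemidef.inv
  have hQil := inv_lb' hQ ha hQa hQb
  have hQiu := inv_ub' hQ ha hQa hQb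
  have hXherm : (P ⊗ₖ Q⁻¹).IsHermitian := kron_isHermitian' hP hQ.inv
  have hXlb : (P ⊗ₖ Q⁻¹ - (a/b) • 1).PosSemidef := by
    have e : P ⊗ₖ Q⁻¹ - (a/b) • (1 : Matrix (ι×ι) (ι×ι) ℂ)
        = (P - a • 1) ⊗ₖ Q⁻¹ + a • ((1 : Matrix ι ι ℂ) ⊗ₖ (Q⁻¹ - b⁻¹ • 1)) := by
      ext ⟨i,j⟩ ⟨p,q⟩
      by_cases hip : i = p <;> by_cases hjq : j = q <;>
        simp [hip, hjq, Matrix.one_apply, Prod.ext_iff, Complex.real_smul] <;>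
        field_simp <;> ring
    rw [e]
    exact (kron_posSemidef' hPa hQinv_psd).add
      (psd_smul' (kron_posSemidef' Matrix.PosSemidef.one hQil) ha.le)
  have hXub : ((b/a) • (1 : Matrix (ι×ι) (ι×ι) ℂ) - P ⊗ₖ Q⁻¹).PosSemidef := by
    have e : (b/a) • (1 : Matrix (ι×ι) (ι×ι) ℂ) - P ⊗ₖ Q⁻¹
        = ((b:ℝ) • 1 - P) ⊗ₖ Q⁻¹ + b • ((1 : Matrix ι ι ℂ) ⊗ₖ (a⁻¹ • 1 - Q⁻¹)) := by
      ext ⟨i,j⟩ ⟨p,q⟩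
      by_cases hip : i = p <;> by_cases hjq : j = q <;>
        simp [hip, hjq, Matrix.one_apply, Prod.ext_iff, Complex.real_smul] <;>
        field_simp <;> ring
    rw [e]
    exact (kron_posSemidef' hPb hQinv_psd).add
      (psd_smul' (kron_posSemidef' Matrix.PosSemidef.one hQiu) hb.le)
  have h := key_combo' hXherm (m := a/b) (M := b/a) (by positivity) hXlb hXub
  have hXinv : (P ⊗ₖ Q⁻¹)⁻¹ = P⁻¹ ⊗ₖ Q := by
    rw [Matrix.inv_kronecker, Matrix.nonsing_inv_nonsing_inv Q
      ((Matrix.isUnit_iff_isUnit_det Q).mp hQpd.isUnit)]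
  rw [hXinv] at h
  have hmm : a/b * (b/a) = 1 := by field_simp
  rw [hmm, one_smul] at h
  exact h

end Aux

/-- Reverse AM–HM inequality (inequality (3.7)): for Hermitian `A_i` with `a·I ≤ A_i ≤ b·I`,
`((1/n) ∑ A_i) ⊗ₛ ((1/n) ∑ A_i⁻¹) ≤ ((a²+b²)/(2ab))·I`. -/
theorem reverse_am_hm_tensor {k n : ℕ} (a b : ℝ) (ha : 0 < a) (hab : a ≤ b)
    (A : Fin n → Matrix (Fin k) (Fin k) ℂ)
    (hAherm : ∀ i, (A i).IsHermitian)
    (hAa : ∀ i, (A i - a • 1).PosSemidef)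
    (hAb : ∀ i, ((b • 1 : Matrix (Fin k) (Fin k) ℂ) - A i).PosSemidef) :
    (((a ^ 2 + b ^ 2) / (2 * a * b)) • (1 : Matrix (Fin k × Fin k) (Fin k × Fin k) ℂ)
      - symKron ((1 / (n : ℝ)) • ∑ i, A i) ((1 / (n : ℝ)) • ∑ i, (A i)⁻¹)).PosSemidef := by
  have hb : 0 < b := ha.trans_le hab
  rcases Nat.eq_zero_or_pos n with hn | hn
  · subst hn
    have h0 : symKron ((1 / ((0:ℕ) : ℝ)) • ∑ i : Fin 0, A i)
        ((1 / ((0:ℕ) : ℝ)) • ∑ i : Fin 0, (A i)⁻¹) = 0 := by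
      simp [symKron]
    rw [h0, sub_zero]
    exact psd_smul' Matrix.PosSemidef.one (by positivity)
  · have hnR : (0:ℝ) < n := by exact_mod_cast hn
    set SA := ∑ i, A i with hSA
    set SI := ∑ i, (A i)⁻¹ with hSI
    have hpair : ∀ p : Fin n × Fin n,
        ((a/b + b/a) • (1 : Matrix (Fin k × Fin k) (Fin k × Fin k) ℂ)
          - A p.1 ⊗ₖ (A p.2)⁻¹ - (A p.1)⁻¹ ⊗ₖ A p.2).PosSemidef :=
      fun p => pair' ha hab (hAherm p.1) (hAherm p.2) (hAa p.1) (hAb p.1) (hAa p.2) (hAb p.2)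
    have hsumpsd := psd_sum' (s := (Finset.univ : Finset (Fin n × Fin n))) (fun p _ => hpair p)
    have hfinal := psd_smul' hsumpsd (r := 1/(2*(n:ℝ)^2)) (by positivity)
    have h1 : ∑ p : Fin n × Fin n, (A p.1 ⊗ₖ (A p.2)⁻¹) = SA ⊗ₖ SI := by
      calc ∑ p : Fin n × Fin n, (A p.1 ⊗ₖ (A p.2)⁻¹)
          = ∑ i, ∑ j, A i ⊗ₖ (A j)⁻¹ := Fintype.sum_prod_type _
        _ = ∑ i, A i ⊗ₖ SI := Finset.sum_congr rfl fun i _ => (kron_sum' _ _).symm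
        _ = SA ⊗ₖ SI := (sum_kron' _ _).symm
    have h2 : ∑ p : Fin n × Fin n, ((A p.1)⁻¹ ⊗ₖ A p.2) = SI ⊗ₖ SA := by
      calc ∑ p : Fin n × Fin n, ((A p.1)⁻¹ ⊗ₖ A p.2)
          = ∑ i, ∑ j, (A i)⁻¹ ⊗ₖ A j := Fintype.sum_prod_type _
        _ = ∑ i, (A i)⁻¹ ⊗ₖ SA := Finset.sum_congr rfl fun i _ => (kron_sum' _ _).symm
        _ = SI ⊗ₖ SA := (sum_kron' _ _).symm
    have hsum : ∑ p : Fin n × Fin n,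
        ((a/b + b/a) • (1 : Matrix (Fin k × Fin k) (Fin k × Fin k) ℂ)
          - A p.1 ⊗ₖ (A p.2)⁻¹ - (A p.1)⁻¹ ⊗ₖ A p.2)
        = ((n:ℝ)^2) • ((a/b + b/a) • (1 : Matrix (Fin k × Fin k) (Fin k × Fin k) ℂ))
          - SA ⊗ₖ SI - SI ⊗ₖ SA := by
      rw [Finset.sum_sub_distrib, Finset.sum_sub_distrib, h1, h2, Finset.sum_const,
        Finset.card_univ, Fintype.card_prod, Fintype.card_fin]
      congr 2
      rw [← Nat.cast_smul_eq_nsmul ℝ]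
      congr 1
      push_cast; ring
    rw [hsum] at hfinal
    have hEq : ((a ^ 2 + b ^ 2) / (2 * a * b)) • (1 : Matrix (Fin k × Fin k) (Fin k × Fin k) ℂ)
        - symKron ((1 / (n : ℝ)) • SA) ((1 / (n : ℝ)) • SI)
        = (1/(2*(n:ℝ)^2)) • (((n:ℝ)^2) • ((a/b + b/a)
            • (1 : Matrix (Fin k × Fin k) (Fin k × Fin k) ℂ)) - SA ⊗ₖ SI - SI ⊗ₖ SA) := by
      simp only [symKron, smul_kronecker, kronecker_smul]
      ext x y
      simp only [Matrix.smul_apply, Matrix.sub_apply, Matrix.add_apply, smul_eq_mul,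
        Complex.real_smul]
      push_cast
      have hnC : ((n:ℂ)) ≠ 0 := by exact_mod_cast hnR.ne'
      have haC : ((a:ℂ)) ≠ 0 := by exact_mod_cast ha.ne'
      have hbC : ((b:ℂ)) ≠ 0 := by exact_mod_cast hb.ne'
      field_simp
      ring
    rw [hEq]
    exact hfinal
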